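/- Let n ≥ 2. There exists ε₀ ∈ (0,1] such that for every 0 < ε < ε₀ the body K_ε is convex. -/

import Mathlib

/-- The body `K_ε = {x : |x|³ + ε x_n³ ≤ 1}`, with the last-coordinate index
passed as a parameter `i`. -/
def Keps (n : ℕ) (ε : ℝ) (i : Fin n) : Set (EuclideanSpace ℝ (Fin n)) :=
  {x | ‖x‖ ^ 3 + ε * (x i) ^ 3 ≤ 1}

/-- A coordinate is bounded by the Euclidean norm. -/
lemma coord_le_norm (n : ℕ) (x : EuclideanSpace ℝ (Fin n)) (i : Fin n) : |x i| ≤ ‖x‖ := by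
  rw [EuclideanSpace.norm_eq]
  have h : |x i| = Real.sqrt (‖x i‖ ^ 2) := by
    rw [Real.sqrt_sq_eq_abs]; simp
  rw [h]
  apply Real.sqrt_le_sqrt
  exact Finset.single_le_sum (f := fun j => ‖x j‖ ^ 2) (fun j _ => by positivity) (Finset.mem_univ i)

/-- Parallelogram-type identity for convex combinations. -/
lemma para_comb {E : Type*} [NormedAddCommGroup E] [InnerProductSpace ℝ E]
    (x y : E) (a b : ℝ) (hab : a + b = 1) :
    ‖a • x + b • y‖ ^ 2 = a * ‖x‖ ^ 2 + b * ‖y‖ ^ 2 - a * b * ‖x - y‖ ^ 2 := by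
  have h1 : ‖a • x + b • y‖ ^ 2 = a^2 * ‖x‖^2 + 2*a*b*(inner ℝ x y : ℝ) + b^2*‖y‖^2 := by
    rw [← real_inner_self_eq_norm_sq, real_inner_add_add_self, real_inner_smul_left,
      real_inner_smul_left, real_inner_smul_left, real_inner_smul_right, real_inner_smul_right,
      real_inner_smul_right, real_inner_self_eq_norm_sq, real_inner_self_eq_norm_sq]
    ring
  have h2 : ‖x - y‖ ^ 2 = ‖x‖^2 - 2*(inner ℝ x y : ℝ) + ‖y‖^2 := by
    rw [← real_inner_self_eq_norm_sq, real_inner_sub_sub_self, real_inner_self_eq_norm_sq,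
      real_inner_self_eq_norm_sq]
  have hb : b = 1 - a := by linarith
  subst hb
  rw [h1, h2]; ring

/-- Power-mean type inequality. -/
lemma pm_ineq (a b u v : ℝ) (ha : 0 ≤ a) (hb : 0 ≤ b) (hab : a + b = 1) (hu : 0 ≤ u) (hv : 0 ≤ v) :
    (a*u^2+b*v^2)^3 ≤ (a*u^3+b*v^3)^2 := by
  have hS : 0 ≤ a*u^2+b*v^2 := by positivity
  have hT : 0 ≤ a*u^3+b*v^3 := by
    have := pow_nonneg hu 3; have := pow_nonneg hv 3; nlinarith
  have hR : 0 ≤ a*u+b*v := by nlinarith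
  have cs1 : (a*u^2+b*v^2)^2 ≤ (a*u+b*v)*(a*u^3+b*v^3) := by
    nlinarith [mul_nonneg (mul_nonneg ha hb) (mul_nonneg (mul_nonneg hu hv) (sq_nonneg (u-v)))]
  have cs2 : (a*u+b*v)^2 ≤ a*u^2+b*v^2 := by
    nlinarith [mul_nonneg (mul_nonneg ha hb) (sq_nonneg (u-v))]
  rcases eq_or_lt_of_le hS with h | h
  · simpa [← h] using sq_nonneg (a*u^3+b*v^3)
  · have h4 : (a*u^2+b*v^2)^4 ≤ ((a*u+b*v)*(a*u^3+b*v^3))^2 := by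
      calc (a*u^2+b*v^2)^4 = ((a*u^2+b*v^2)^2)^2 := by ring
        _ ≤ ((a*u+b*v)*(a*u^3+b*v^3))^2 := by
            apply pow_le_pow_left₀ (by positivity) cs1
    nlinarith [mul_nonneg (mul_nonneg hR hT) (mul_nonneg hR hT), sq_nonneg (a*u^3+b*v^3),
      mul_le_mul_of_nonneg_right cs2 (sq_nonneg (a*u^3+b*v^3))]

/-- Quantitative convexity of the cube. -/
lemma cube_gain (P Q : ℝ) (hP : 0 ≤ P) (hPQ : P ≤ Q) : (3/2)*P*(Q^2-P^2) ≤ Q^3 - P^3 := by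
  nlinarith [mul_nonneg (mul_nonneg (sub_nonneg.2 hPQ) (sub_nonneg.2 hPQ)) hP,
    mul_nonneg (sub_nonneg.2 hPQ) (mul_nonneg (sub_nonneg.2 hPQ) (by linarith : (0:ℝ) ≤ 2*Q+P))]

/-- Convexity defect identity for the cube. -/
lemma cube_defect (a b s t : ℝ) (hab : a + b = 1) :
    (a*s+b*t)^3 - (a*s^3 + b*t^3) = -(a*b*(s-t)^2*((1+a)*s+(1+b)*t)) := by
  have hb : b = 1 - a := by linarith
  subst hb; ring

/-- Cube is monotone. -/
lemma cube_mono {p q : ℝ} (h : p ≤ q) : p^3 ≤ q^3 := by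
  nlinarith [sq_nonneg (p+q), sq_nonneg (p-q), sq_nonneg p, sq_nonneg q,
    mul_nonneg (sub_nonneg.2 h) (sq_nonneg (p+q))]

lemma cube_root_bd {u : ℝ} (hu : 0 ≤ u) (h : u^3 ≤ 8/7) : u ≤ 21/20 := by
  nlinarith [sq_nonneg (u - 21/20), sq_nonneg (u + 21/20), sq_nonneg u]

lemma sq_from_sq {p q : ℝ} (hp : 0 ≤ p) (hq : 0 ≤ q) (h : p^2 ≤ q^2) : p ≤ q := by
  nlinarith [sq_nonneg (p - q), sq_nonneg (p + q)]

set_option maxHeartbeats 2000000 in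
/-- There is `ε₀ ∈ (0,1]` such that `K_ε` is convex for all `0 < ε < ε₀`. -/
theorem stmt4 (n : ℕ) (hn : 2 ≤ n) :
    ∃ ε₀ : ℝ, 0 < ε₀ ∧ ε₀ ≤ 1 ∧
      ∀ ε : ℝ, 0 < ε → ε < ε₀ → Convex ℝ (Keps n ε ⟨n - 1, by omega⟩) := by
  refine ⟨1/8, by norm_num, by norm_num, ?_⟩
  intro ε hε hε8
  set i : Fin n := ⟨n - 1, by omega⟩ with hi
  intro x hx y hy a b ha hb hab
  simp only [Keps, Set.mem_setOf_eq] at hx hy ⊢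
  obtain ⟨u, hu⟩ : ∃ u, ‖x‖ = u := ⟨_, rfl⟩
  obtain ⟨v, hv⟩ : ∃ v, ‖y‖ = v := ⟨_, rfl⟩
  obtain ⟨s, hs⟩ : ∃ s, x i = s := ⟨_, rfl⟩
  obtain ⟨t, ht⟩ : ∃ t, y i = t := ⟨_, rfl⟩
  obtain ⟨d, hd⟩ : ∃ d, ‖x - y‖ = d := ⟨_, rfl⟩
  obtain ⟨w, hw⟩ : ∃ w, ‖a • x + b • y‖ = w := ⟨_, rfl⟩
  rw [hu, hs] at hx
  rw [hv, ht] at hy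
  have hu0 : 0 ≤ u := hu ▸ norm_nonneg x
  have hv0 : 0 ≤ v := hv ▸ norm_nonneg y
  have hw0 : 0 ≤ w := hw ▸ norm_nonneg _
  have hsu : |s| ≤ u := by rw [← hu, ← hs]; exact coord_le_norm n x i
  have htv : |t| ≤ v := by rw [← hv, ← ht]; exact coord_le_norm n y i
  have hr : (a • x + b • y) i = a*s + b*t := by
    rw [← hs, ← ht]
    simp [PiLp.add_apply, PiLp.smul_apply, smul_eq_mul]
  rw [hw, hr]
  -- size bounds
  have hu3 : u^3 ≤ 8/7 := by
    have h1 : -u ≤ s := by have := neg_abs_le s; linarith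
    have h2 : -u^3 ≤ s^3 := by
      have h3 := cube_mono h1
      have h4 : (-u)^3 = -u^3 := by ring
      linarith
    have h5 : ε*(-u^3) ≤ ε*s^3 := mul_le_mul_of_nonneg_left h2 hε.le
    have h6 : 0 ≤ (1/8 - ε)*u^3 :=
      mul_nonneg (by linarith) (pow_nonneg hu0 3)
    nlinarith [h5, h6, hx]
  have hv3 : v^3 ≤ 8/7 := by
    have h1 : -v ≤ t := by have := neg_abs_le t; linarith
    have h2 : -v^3 ≤ t^3 := by
      have h3 := cube_mono h1
      have h4 : (-v)^3 = -v^3 := by ring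
      linarith
    have h5 : ε*(-v^3) ≤ ε*t^3 := mul_le_mul_of_nonneg_left h2 hε.le
    have h6 : 0 ≤ (1/8 - ε)*v^3 :=
      mul_nonneg (by linarith) (pow_nonneg hv0 3)
    nlinarith [h5, h6, hy]
  have hub : u ≤ 21/20 := cube_root_bd hu0 hu3
  have hvb : v ≤ 21/20 := cube_root_bd hv0 hv3
  -- combination of membership
  have hcombo : a*u^3 + b*v^3 + ε*(a*s^3) + ε*(b*t^3) ≤ 1 := by
    have h1 : a*(u^3 + ε*s^3) ≤ a*1 := mul_le_mul_of_nonneg_left hx ha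
    have h2 : b*(v^3 + ε*t^3) ≤ b*1 := mul_le_mul_of_nonneg_left hy hb
    nlinarith [h1, h2]
  -- distance controls coordinates
  have hdst : (s - t)^2 ≤ d^2 := by
    have h1 : |(x - y) i| ≤ ‖x - y‖ := coord_le_norm n (x - y) i
    have h2 : (x - y) i = s - t := by rw [← hs, ← ht]; simp
    rw [h2, hd] at h1
    have hd0 : 0 ≤ d := hd ▸ norm_nonneg _
    nlinarith [sq_abs (s - t), abs_nonneg (s - t)]
  have habd : 0 ≤ a*b*d^2 := by positivity
  -- parallelogram
  have hw2 : w^2 = a*u^2 + b*v^2 - a*b*d^2 := by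
    rw [← hu, ← hv, ← hd, ← hw]; exact para_comb x y a b hab
  -- defect bound
  have h5 : (a*s + b*t)^3 - (a*s^3 + b*t^3) ≤ 5*(a*b*d^2) := by
    have hid := cube_defect a b s t hab
    have hX : -((1+a)*s + (1+b)*t) ≤ 5 := by
      have h1 : -s ≤ |s| := by have := neg_abs_le s; linarith
      have h2 : -t ≤ |t| := by have := neg_abs_le t; linarith
      have ha1 : a ≤ 1 := by linarith
      have hb1 : b ≤ 1 := by linarith
      nlinarith [abs_nonneg s, abs_nonneg t, h1, h2]
    have hst2 : 0 ≤ a*b*(s-t)^2 := by positivity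
    have step1 : -(a*b*(s-t)^2*((1+a)*s+(1+b)*t)) ≤ a*b*(s-t)^2*5 := by
      nlinarith [mul_le_mul_of_nonneg_left hX hst2]
    have step2 : a*b*(s-t)^2*5 ≤ 5*(a*b*d^2) := by
      nlinarith [mul_le_mul_of_nonneg_left hdst (mul_nonneg ha hb)]
    linarith [hid ▸ (le_trans step1 step2 :
      -(a*b*(s-t)^2*((1+a)*s+(1+b)*t)) ≤ 5*(a*b*d^2))]
  -- case split on size of w
  by_cases hwhalf : w ≤ 1/2
  · -- small case
    have hrw : |a*s+b*t| ≤ w := by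
      rw [← hw, ← hr]; exact coord_le_norm n _ i
    have hr3 : (a*s+b*t)^3 ≤ (1/2)^3 := cube_mono (by
      have := le_abs_self (a*s+b*t); linarith)
    have hrneg : -(1/2)^3 ≤ (a*s+b*t)^3 := by
      have h1 : -(1/2) ≤ a*s+b*t := by have := neg_abs_le (a*s+b*t); linarith
      have h2 := cube_mono h1
      have h3 : (-(1/2) : ℝ)^3 = -(1/2)^3 := by ring
      linarith
    have hw3 : w^3 ≤ (1/2)^3 := cube_mono hwhalf
    have h1 : ε*(a*s+b*t)^3 ≤ ε*(1/2)^3 := mul_le_mul_of_nonneg_left hr3 hε.le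
    have h2 : ε*(1/2)^3 ≤ (1/8)*(1/2)^3 := by nlinarith
    nlinarith [h1, h2, hw3]
  · -- main case : w ≥ 1/2
    push_neg at hwhalf
    set Q := Real.sqrt (a*u^2 + b*v^2) with hQ
    have hq2 : Q^2 = a*u^2 + b*v^2 := Real.sq_sqrt (by positivity)
    have hQ0 : 0 ≤ Q := Real.sqrt_nonneg _
    have hwQ : w ≤ Q := by
      apply sq_from_sq hw0 hQ0
      rw [hq2, hw2]; linarith
    have hT0 : 0 ≤ a*u^3 + b*v^3 := by
      have h1 := pow_nonneg hu0 3
      have h2 := pow_nonneg hv0 3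
      nlinarith [mul_nonneg ha h1, mul_nonneg hb h2]
    have hQT : Q^3 ≤ a*u^3 + b*v^3 := by
      apply sq_from_sq (by positivity) hT0
      calc (Q^3)^2 = (Q^2)^3 := by ring
        _ = (a*u^2 + b*v^2)^3 := by rw [hq2]
        _ ≤ (a*u^3 + b*v^3)^2 := pm_ineq a b u v ha hb hab hu0 hv0
    have he : a*b*d^2 = Q^2 - w^2 := by rw [hq2, hw2]; ring
    have hL2 : (3/2)*w*(a*b*d^2) ≤ Q^3 - w^3 := by
      rw [he]; exact cube_gain w Q hw0 hwQ
    have hgain : (3/4)*(a*b*d^2) ≤ a*u^3 + b*v^3 - w^3 := by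
      nlinarith [mul_le_mul_of_nonneg_right hwhalf.le habd, hL2, hQT]
    have hmul1 : ε*((a*s+b*t)^3 - (a*s^3 + b*t^3)) ≤ ε*(5*(a*b*d^2)) :=
      mul_le_mul_of_nonneg_left h5 hε.le
    have hmul2 : ε*(5*(a*b*d^2)) ≤ (3/4)*(a*b*d^2) := by
      nlinarith [mul_le_mul_of_nonneg_right (show 5*ε ≤ 3/4 by linarith) habd]
    nlinarith [hcombo, hgain, hmul1, hmul2]
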